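/- Let ℓ : ℝ → ℝ be convex and differentiable, let σ > 0 and n > 0 be real numbers, and let b ∈ ℝ. Then λ* ∈ ℝ minimizes the extended-real-valued function λ ↦ (1/n)·ℓ*(λ) + (λ − b)²/(2σ) if and only if λ* minimizes the function λ ↦ (1/n)·ℓ((n/σ)·(b − λ)) + λ²/(2σ). -/

import Mathlib

/-- The convex (Fenchel) conjugate of `ℓ : ℝ → ℝ`, valued in the extended reals. -/
noncomputable def sconj (g : ℝ → ℝ) (v : ℝ) : EReal :=
  ⨆ x : ℝ, ((v * x - g x : ℝ) : EReal)

/-- Tangent-line inequality for convex differentiable functions. -/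
lemma tangent_le {ℓ : ℝ → ℝ} (hconv : ConvexOn ℝ Set.univ ℓ)
    (hdiff : Differentiable ℝ ℓ) (x y : ℝ) :
    ℓ x + deriv ℓ x * (y - x) ≤ ℓ y := by
  rcases lt_trichotomy x y with h | h | h
  · have hs := hconv.deriv_le_slope (Set.mem_univ x) (Set.mem_univ y) h (hdiff x)
    rw [slope_def_field] at hs
    have hyx : 0 < y - x := sub_pos.2 h
    have := (le_div_iff₀ hyx).1 hs
    linarith
  · subst h; simp
  · have hs := hconv.slope_le_deriv (Set.mem_univ y) (Set.mem_univ x) h (hdiff x)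
    rw [slope_def_field] at hs
    have hxy : 0 < x - y := sub_pos.2 h
    have := (div_le_iff₀ hxy).1 hs
    linarith

/-- If the fixed-point/criticality condition holds at `μ`, then `μ` minimizes the
dual objective, and the conjugate is attained there. -/
lemma minF_of_crit {ℓ : ℝ → ℝ} (hconv : ConvexOn ℝ Set.univ ℓ)
    (hdiff : Differentiable ℝ ℓ) {σ n : ℝ} (hσ : 0 < σ) (hn : 0 < n) (b μ : ℝ)
    (hcrit : deriv ℓ ((n / σ) * (b - μ)) = μ) :
    (∀ lam : ℝ,
        ((1 / n : ℝ) : EReal) * sconj ℓ μ + (((μ - b) ^ 2 / (2 * σ) : ℝ) : EReal)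
          ≤ ((1 / n : ℝ) : EReal) * sconj ℓ lam + (((lam - b) ^ 2 / (2 * σ) : ℝ) : EReal)) ∧
      sconj ℓ μ = ((μ * ((n / σ) * (b - μ)) - ℓ ((n / σ) * (b - μ)) : ℝ) : EReal) := by
  set x : ℝ := (n / σ) * (b - μ) with hx
  have hval : sconj ℓ μ = ((μ * x - ℓ x : ℝ) : EReal) := by
    refine le_antisymm (iSup_le fun y => ?_) (le_iSup (fun y => ((μ * y - ℓ y : ℝ) : EReal)) x)
    have ht := tangent_le hconv hdiff x y
    rw [hcrit] at ht
    exact EReal.coe_le_coe_iff.2 (by nlinarith)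
  refine ⟨fun lam => ?_, hval⟩
  have h1 : ((lam * x - ℓ x : ℝ) : EReal) ≤ sconj ℓ lam :=
    le_iSup (fun y => ((lam * y - ℓ y : ℝ) : EReal)) x
  have hreal : (1 / n) * (μ * x - ℓ x) + (μ - b) ^ 2 / (2 * σ)
      ≤ (1 / n) * (lam * x - ℓ x) + (lam - b) ^ 2 / (2 * σ) := by
    have hn' : n ≠ 0 := ne_of_gt hn
    have hσ' : σ ≠ 0 := ne_of_gt hσ
    rw [← sub_nonneg, hx]
    have hid : (1 / n * (lam * (n / σ * (b - μ)) - ℓ (n / σ * (b - μ))) + (lam - b) ^ 2 / (2 * σ))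
        - (1 / n * (μ * (n / σ * (b - μ)) - ℓ (n / σ * (b - μ))) + (μ - b) ^ 2 / (2 * σ))
        = (lam - μ) ^ 2 / (2 * σ) := by
      field_simp
      ring
    rw [hid]
    positivity
  have hnn : (0 : EReal) ≤ ((1 / n : ℝ) : EReal) := by
    exact_mod_cast (by positivity : (0:ℝ) ≤ 1 / n)
  calc ((1 / n : ℝ) : EReal) * sconj ℓ μ + (((μ - b) ^ 2 / (2 * σ) : ℝ) : EReal)
      = (((1 / n) * (μ * x - ℓ x) + (μ - b) ^ 2 / (2 * σ) : ℝ) : EReal) := by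
        rw [hval, ← EReal.coe_mul, ← EReal.coe_add]
    _ ≤ (((1 / n) * (lam * x - ℓ x) + (lam - b) ^ 2 / (2 * σ) : ℝ) : EReal) :=
        EReal.coe_le_coe_iff.2 hreal
    _ = ((1 / n : ℝ) : EReal) * ((lam * x - ℓ x : ℝ) : EReal)
          + (((lam - b) ^ 2 / (2 * σ) : ℝ) : EReal) := by
        rw [← EReal.coe_mul, ← EReal.coe_add]
    _ ≤ ((1 / n : ℝ) : EReal) * sconj ℓ lam + (((lam - b) ^ 2 / (2 * σ) : ℝ) : EReal) :=
        add_le_add (mul_le_mul_of_nonneg_left h1 hnn) le_rfl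

/-- If `μ` minimizes the primal objective, the criticality condition holds at `μ`. -/
lemma crit_of_minG {ℓ : ℝ → ℝ} (hdiff : Differentiable ℝ ℓ) {σ n : ℝ}
    (hσ : 0 < σ) (hn : 0 < n) (b μ : ℝ)
    (h : ∀ lam : ℝ,
      (1 / n) * ℓ ((n / σ) * (b - μ)) + μ ^ 2 / (2 * σ)
        ≤ (1 / n) * ℓ ((n / σ) * (b - lam)) + lam ^ 2 / (2 * σ)) :
    deriv ℓ ((n / σ) * (b - μ)) = μ := by
  have hu : HasDerivAt (fun l : ℝ => (n / σ) * (b - l)) (-(n / σ)) μ := by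
    have h1 : HasDerivAt (fun l : ℝ => b - l) (-1) μ := (hasDerivAt_id μ).const_sub b
    simpa using h1.const_mul (n / σ)
  have h2 : HasDerivAt (fun l : ℝ => ℓ ((n / σ) * (b - l)))
      (deriv ℓ ((n / σ) * (b - μ)) * (-(n / σ))) μ :=
    (hdiff _).hasDerivAt.comp μ hu
  have hs : HasDerivAt (fun l : ℝ => l ^ 2 / (2 * σ)) ((2 * μ ^ 1) / (2 * σ)) μ := by
    simpa using (hasDerivAt_pow 2 μ).div_const (2 * σ)
  have h3 : HasDerivAt (fun l : ℝ => (1 / n) * ℓ ((n / σ) * (b - l)) + l ^ 2 / (2 * σ))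
      ((1 / n) * (deriv ℓ ((n / σ) * (b - μ)) * (-(n / σ))) + (2 * μ ^ 1) / (2 * σ)) μ :=
    (h2.const_mul (1 / n)).add hs
  have hloc : IsLocalMin (fun l : ℝ => (1 / n) * ℓ ((n / σ) * (b - l)) + l ^ 2 / (2 * σ)) μ :=
    Filter.Eventually.of_forall h
  have hn' : n ≠ 0 := ne_of_gt hn
  have hσ' : σ ≠ 0 := ne_of_gt hσ
  set D := deriv ℓ ((n / σ) * (b - μ)) with hD
  have hz := hloc.hasDerivAt_eq_zero h3
  have e1 : (1 / n) * (D * -(n / σ)) + 2 * μ ^ 1 / (2 * σ) = (μ - D) / σ := by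
    field_simp
    ring
  rw [e1] at hz
  have h4 := (div_eq_zero_iff.1 hz).resolve_right hσ'
  linarith

theorem stmt_11 (ℓ : ℝ → ℝ) (hconv : ConvexOn ℝ Set.univ ℓ)
    (hdiff : Differentiable ℝ ℓ)
    (σ n : ℝ) (hσ : 0 < σ) (hn : 0 < n) (b lamstar : ℝ) :
    (∀ lam : ℝ,
        ((1 / n : ℝ) : EReal) * sconj ℓ lamstar + (((lamstar - b) ^ 2 / (2 * σ) : ℝ) : EReal)
          ≤ ((1 / n : ℝ) : EReal) * sconj ℓ lam + (((lam - b) ^ 2 / (2 * σ) : ℝ) : EReal))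
      ↔ (∀ lam : ℝ,
        (1 / n) * ℓ ((n / σ) * (b - lamstar)) + lamstar ^ 2 / (2 * σ)
          ≤ (1 / n) * ℓ ((n / σ) * (b - lam)) + lam ^ 2 / (2 * σ)) := by
  have hn' : n ≠ 0 := ne_of_gt hn
  have hσ' : σ ≠ 0 := ne_of_gt hσ
  set G : ℝ → ℝ := fun lam => (1 / n) * ℓ ((n / σ) * (b - lam)) + lam ^ 2 / (2 * σ) with hG
  constructor
  · intro hF
    -- existence of a global minimizer of G
    have hGcont : Continuous G := by
      rw [hG]
      apply Continuous.add
      · exact continuous_const.mul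
          (hdiff.continuous.comp (continuous_const.mul (continuous_const.sub continuous_id)))
      · exact (continuous_pow 2).div_const _
    clear_value G
    set A : ℝ := deriv ℓ 0 with hA
    clear_value A
    set c2 : ℝ := (1 / n) * ℓ 0 + (A / σ) * b - A ^ 2 / (2 * σ) with hc2
    clear_value c2
    have hq2 : ∀ lam : ℝ, c2 + (lam - A) ^ 2 / (2 * σ) ≤ G lam := by
      intro lam
      have ht := tangent_le hconv hdiff 0 ((n / σ) * (b - lam))
      have hmul : (1 / n) * (ℓ 0 + deriv ℓ 0 * ((n / σ) * (b - lam) - 0))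
          ≤ (1 / n) * ℓ ((n / σ) * (b - lam)) :=
        mul_le_mul_of_nonneg_left ht (by positivity)
      have heq : (1 / n) * (ℓ 0 + deriv ℓ 0 * ((n / σ) * (b - lam) - 0)) + lam ^ 2 / (2 * σ)
          = c2 + (lam - A) ^ 2 / (2 * σ) := by
        rw [hc2, hA]; field_simp; ring
      have : c2 + (lam - A) ^ 2 / (2 * σ)
          ≤ (1 / n) * ℓ ((n / σ) * (b - lam)) + lam ^ 2 / (2 * σ) := by linarith
      simpa [hG] using this
    have hcoer : ∀ᶠ lam in Filter.cocompact ℝ, G 0 ≤ G lam := by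
      rw [cocompact_eq_atBot_atTop, Filter.eventually_sup]
      obtain ⟨s, hs0, hs2⟩ : ∃ s : ℝ, 0 ≤ s ∧ s ^ 2 = 2 * σ * max (G 0 - c2) 0 :=
        ⟨Real.sqrt (2 * σ * max (G 0 - c2) 0), Real.sqrt_nonneg _,
          Real.sq_sqrt (by positivity)⟩
      have hmax : G 0 - c2 ≤ max (G 0 - c2) 0 := le_max_left _ _
      have key : ∀ lam : ℝ, s ^ 2 ≤ (lam - A) ^ 2 → G 0 ≤ G lam := by
        intro lam hsq
        have hM := mul_le_mul_of_nonneg_right hmax (by positivity : (0:ℝ) ≤ 2 * σ)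
        have h1 : G 0 - c2 ≤ (lam - A) ^ 2 / (2 * σ) := by
          rw [le_div_iff₀ (by positivity)]
          nlinarith [hM, hs2, hsq]
        have := hq2 lam
        linarith
      constructor
      · refine Filter.eventually_atBot.2 ⟨A - s, fun lam hlam => key lam ?_⟩
        nlinarith
      · refine Filter.eventually_atTop.2 ⟨A + s, fun lam hlam => key lam ?_⟩
        nlinarith
    obtain ⟨μ, hμ⟩ := hGcont.exists_forall_le' 0 hcoer
    have hμ' : ∀ lam : ℝ,
        (1 / n) * ℓ ((n / σ) * (b - μ)) + μ ^ 2 / (2 * σ)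
          ≤ (1 / n) * ℓ ((n / σ) * (b - lam)) + lam ^ 2 / (2 * σ) := by
      intro lam
      have := hμ lam
      rw [hG] at this
      simpa using this
    have hcritμ : deriv ℓ ((n / σ) * (b - μ)) = μ :=
      crit_of_minG hdiff hσ hn b μ hμ'
    obtain ⟨hFμ, hvalμ⟩ := minF_of_crit hconv hdiff hσ hn b μ hcritμ
    -- show lamstar = μ by strict convexity (midpoint argument)
    by_cases hne : lamstar = μ
    · intro lam; rw [hne]; exact hμ' lam
    exfalso
    set xμ : ℝ := (n / σ) * (b - μ) with hxμ
    clear_value xμ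
    set rμ : ℝ := μ * xμ - ℓ xμ with hrμ
    clear_value rμ
    set mval : ℝ := (1 / n) * rμ + (μ - b) ^ 2 / (2 * σ) with hmval
    clear_value mval
    have hFμreal : ((1 / n : ℝ) : EReal) * sconj ℓ μ + (((μ - b) ^ 2 / (2 * σ) : ℝ) : EReal)
        = ((mval : ℝ) : EReal) := by
      rw [hvalμ, ← EReal.coe_mul, ← EReal.coe_add, hmval]
    have hle := hF μ
    have hge := hFμ lamstar
    -- finiteness of sconj ℓ lamstar
    have hnetop : sconj ℓ lamstar ≠ ⊤ := by
      intro htop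
      rw [htop] at hle
      rw [EReal.coe_mul_top_of_pos (by positivity), EReal.top_add_coe, hFμreal] at hle
      exact (lt_irrefl _ (lt_of_le_of_lt hle (EReal.coe_lt_top mval)))
    have hnebot : sconj ℓ lamstar ≠ ⊥ := by
      intro hbot
      have h0 : ((lamstar * 0 - ℓ 0 : ℝ) : EReal) ≤ sconj ℓ lamstar :=
        le_iSup (fun y => ((lamstar * y - ℓ y : ℝ) : EReal)) 0
      rw [hbot, le_bot_iff] at h0
      exact (EReal.coe_ne_bot _) h0
    set r : ℝ := (sconj ℓ lamstar).toReal with hrdef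
    clear_value r
    have hr : sconj ℓ lamstar = ((r : ℝ) : EReal) := by
      rw [hrdef]; exact (EReal.coe_toReal hnetop hnebot).symm
    have hbound1 : ∀ x : ℝ, lamstar * x - ℓ x ≤ r := by
      intro x
      have := le_iSup (fun y => ((lamstar * y - ℓ y : ℝ) : EReal)) x
      rw [show (⨆ y : ℝ, ((lamstar * y - ℓ y : ℝ) : EReal)) = sconj ℓ lamstar from rfl, hr] at this
      exact EReal.coe_le_coe_iff.1 this
    have hbound2 : ∀ x : ℝ, μ * x - ℓ x ≤ rμ := by
      intro x
      have ht := tangent_le hconv hdiff xμ x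
      rw [show deriv ℓ xμ = μ from hcritμ] at ht
      rw [hrμ]; nlinarith
    -- the values of F at lamstar and μ agree (both are minima)
    have heqval : (1 / n) * r + (lamstar - b) ^ 2 / (2 * σ) = mval := by
      have hFls : ((1 / n : ℝ) : EReal) * sconj ℓ lamstar
            + (((lamstar - b) ^ 2 / (2 * σ) : ℝ) : EReal)
          = (((1 / n) * r + (lamstar - b) ^ 2 / (2 * σ) : ℝ) : EReal) := by
        rw [hr, ← EReal.coe_mul, ← EReal.coe_add]
      have h1 := hle
      have h2 := hge
      rw [hFls, hFμreal] at h1 h2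
      exact le_antisymm (EReal.coe_le_coe_iff.1 h1) (EReal.coe_le_coe_iff.1 h2)
    -- midpoint
    set ν : ℝ := (lamstar + μ) / 2 with hν
    clear_value ν
    have hsν : sconj ℓ ν ≤ (((r + rμ) / 2 : ℝ) : EReal) := by
      refine iSup_le fun x => EReal.coe_le_coe_iff.2 ?_
      have h1 := hbound1 x
      have h2 := hbound2 x
      rw [hν]; nlinarith
    have hFν : ((1 / n : ℝ) : EReal) * sconj ℓ ν + (((ν - b) ^ 2 / (2 * σ) : ℝ) : EReal)
        ≤ (((1 / n) * ((r + rμ) / 2) + (ν - b) ^ 2 / (2 * σ) : ℝ) : EReal) := by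
      calc ((1 / n : ℝ) : EReal) * sconj ℓ ν + (((ν - b) ^ 2 / (2 * σ) : ℝ) : EReal)
          ≤ ((1 / n : ℝ) : EReal) * (((r + rμ) / 2 : ℝ) : EReal)
              + (((ν - b) ^ 2 / (2 * σ) : ℝ) : EReal) := by
            have hnn : (0 : EReal) ≤ ((1 / n : ℝ) : EReal) := by
              exact_mod_cast (by positivity : (0:ℝ) ≤ 1 / n)
            exact add_le_add (mul_le_mul_of_nonneg_left hsν hnn) le_rfl
        _ = (((1 / n) * ((r + rμ) / 2) + (ν - b) ^ 2 / (2 * σ) : ℝ) : EReal) := by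
            rw [← EReal.coe_mul, ← EReal.coe_add]
    have hFνge : ((mval : ℝ) : EReal)
        ≤ ((1 / n : ℝ) : EReal) * sconj ℓ ν + (((ν - b) ^ 2 / (2 * σ) : ℝ) : EReal) := by
      rw [← hFμreal]; exact hFμ ν
    have hfin : mval ≤ (1 / n) * ((r + rμ) / 2) + (ν - b) ^ 2 / (2 * σ) :=
      EReal.coe_le_coe_iff.1 (le_trans hFνge hFν)
    have hpos : 0 < (lamstar - μ) ^ 2 := sq_pos_iff.2 (sub_ne_zero.2 hne)
    rw [hν] at hfin
    rw [hmval] at heqval hfin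
    have h2σ : 0 < 2 * σ := by positivity
    have hpos2 : 0 < (lamstar - μ) ^ 2 * (2 * σ)⁻¹ := mul_pos hpos (inv_pos.2 h2σ)
    have hkey : ((lamstar + μ) / 2 - b) ^ 2 / (2 * σ)
        = ((lamstar - b) ^ 2 / (2 * σ) + (μ - b) ^ 2 / (2 * σ)) / 2
          - (lamstar - μ) ^ 2 * (2 * σ)⁻¹ / 4 := by
      field_simp
      ring
    linarith [heqval, hfin, hpos2, hkey]
  · intro hGmin
    have hcrit : deriv ℓ ((n / σ) * (b - lamstar)) = lamstar :=
      crit_of_minG hdiff hσ hn b lamstar hGmin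
    exact (minF_of_crit hconv hdiff hσ hn b lamstar hcrit).1
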